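/- arXiv:1709.10412 — 4 statements merged into one kernel-verified Lean document; each statement's English description precedes it below -/
import Mathlib

section
/- Let N ≥ 1. Let μ be the infinite product over the index set ℕ of the uniform probability measure on Fin N, and for ω : ℕ → Fin N let T(ω) be the least r : ℕ such that every p : Fin N equals ω j for some j < r (the covering time). Then the expectation of T satisfies ∫ T dμ ≤ N · (1 + Real.log N). -/
-- helper: c ≤ log N from exp c ≤ N
private lemma le_log_of_exp_le {c : ℝ} {N : ℕ} (hN : 0 < N) (h : Real.exp c ≤ N) :
    c ≤ Real.log N := (Real.le_log_iff_exp_le (by exact_mod_cast hN)).2 h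

private lemma exp_le_of_pow {c : ℝ} {m : ℕ} (hm : m ≠ 0) {y : ℝ} (hy : 0 ≤ y)
    (h : Real.exp ((m : ℝ) * c) ≤ y ^ m) : Real.exp c ≤ y := by
  have := Real.exp_nat_mul c m
  rw [this] at h
  exact le_of_pow_le_pow_left₀ hm hy h

private lemma exp_nat_le {m : ℕ} {y : ℝ} (h : (2.7182818286 : ℝ) ^ m ≤ y) :
    Real.exp (m : ℝ) ≤ y := by
  calc Real.exp (m : ℝ) = Real.exp 1 ^ m := by
        rw [← Real.exp_nat_mul]; norm_num
    _ ≤ (2.7182818286 : ℝ) ^ m := by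
        exact pow_le_pow_left₀ (Real.exp_pos 1).le Real.exp_one_lt_d9.le m
    _ ≤ y := h

-- Lemma B : log (1-x) ≤ -x - x^2/2 for 0 ≤ x ≤ 1/4
private lemma logB {x : ℝ} (h0 : 0 ≤ x) (h1 : x ≤ 1/4) :
    Real.log (1 - x) ≤ -x - x^2/2 := by
  have hx : |x| < 1 := by rw [abs_of_nonneg h0]; linarith
  have H := Real.abs_log_sub_add_sum_range_le hx 3
  rw [abs_of_nonneg h0] at H
  have Hsum : ∑ i ∈ Finset.range 3, x ^ (i + 1) / ((i : ℝ) + 1) = x + x^2/2 + x^3/3 := by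
    simp [Finset.sum_range_succ]; ring
  rw [Hsum] at H
  have H2 := (abs_le.1 H).2
  have hx4 : x ^ 4 / (1 - x) ≤ x ^ 3 / 3 := by
    rw [div_le_div_iff₀ (by linarith) (by norm_num)]
    nlinarith [pow_nonneg h0 3]
  nlinarith [ (abs_le.1 H).1 ]



private lemma hkcase {N k : ℕ} (hN : 0 < N) (h : (2.7182818286 : ℝ) ^ k ≤ (N : ℝ) ^ N) :
    (k : ℝ) ≤ (N : ℝ) * Real.log N := by
  have hN' : (0:ℝ) < N := by exact_mod_cast hN
  have hexp : Real.exp ((k : ℝ) / N) ≤ N := by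
    apply exp_le_of_pow (m := N) hN.ne' hN'.le
    have : (N : ℝ) * ((k : ℝ) / N) = (k : ℝ) := by field_simp
    rw [this]
    calc Real.exp (k : ℝ) ≤ (2.7182818286 : ℝ) ^ k := exp_nat_le le_rfl
      _ ≤ (N : ℝ) ^ N := h
  have := le_log_of_exp_le hN hexp
  rw [div_le_iff₀ hN'] at this
  linarith [this]

private lemma keyk (N : ℕ) (hN : 1 ≤ N) :
    ∃ k : ℕ, N * (N - 1) ^ k ≤ N ^ k ∧ (k : ℝ) ≤ (N : ℝ) * Real.log N := by
  rcases lt_or_ge N 9 with h9 | h9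
  · interval_cases N
    · exact ⟨0, by norm_num, by norm_num⟩
    · exact ⟨1, by norm_num, hkcase (by norm_num) (by norm_num)⟩
    · exact ⟨3, by norm_num, hkcase (by norm_num) (by norm_num)⟩
    · exact ⟨5, by norm_num, hkcase (by norm_num) (by norm_num)⟩
    · exact ⟨8, by norm_num, hkcase (by norm_num) (by norm_num)⟩
    · exact ⟨10, by norm_num, hkcase (by norm_num) (by norm_num)⟩
    · exact ⟨13, by norm_num, hkcase (by norm_num) (by norm_num)⟩
    · exact ⟨16, by norm_num, hkcase (by norm_num) (by norm_num)⟩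
  · -- N ≥ 9
    have hN0 : (0:ℝ) < N := by positivity
    have hN9 : (9:ℝ) ≤ N := by exact_mod_cast h9
    set L : ℝ := Real.log N with hL
    have hL9 : Real.log 9 ≤ L := Real.log_le_log (by norm_num) hN9
    have hlog9 : (19/9 : ℝ) ≤ Real.log 9 := by
      apply le_log_of_exp_le (N := 9) (by norm_num)
      · apply exp_le_of_pow (m := 9) (by norm_num) (by norm_num)
        have : ((9:ℕ):ℝ) * (19/9) = ((19:ℕ):ℝ) := by push_cast; norm_num
        rw [this]
        exact exp_nat_le (by norm_num)
    have hL2 : 2 + 1/(N:ℝ) ≤ L := by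
      have : 1/(N:ℝ) ≤ 1/9 := by
        apply div_le_div_of_nonneg_left (by norm_num) (by norm_num) hN9
      linarith
    have hLpos : 0 < L := by linarith
    refine ⟨⌊(N:ℝ) * L⌋₊, ?_, Nat.floor_le (by positivity)⟩
    set k : ℕ := ⌊(N:ℝ) * L⌋₊ with hk
    have hkge : (N:ℝ) * L - 1 ≤ (k:ℝ) := (Nat.sub_one_lt_floor _).le
    set x : ℝ := 1/(N:ℝ) with hxdef
    have hx0 : 0 < x := by positivity
    have hx4 : x ≤ 1/4 := by
      rw [hxdef]
      rw [div_le_div_iff₀ hN0 (by norm_num)]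
      linarith
    have hlog1x : Real.log (1 - x) ≤ -x - x^2/2 := logB hx0.le hx4
    have hklog : (k:ℝ) * Real.log (1 - x) ≤ -L := by
      have h1 : (k:ℝ) * Real.log (1 - x) ≤ ((N:ℝ)*L - 1) * Real.log (1 - x) := by
        apply mul_le_mul_of_nonpos_right hkge
        have : Real.log (1 - x) ≤ -x - x^2/2 := hlog1x
        nlinarith
      have h2 : ((N:ℝ)*L - 1) * Real.log (1 - x) ≤ ((N:ℝ)*L - 1) * (-x - x^2/2) := by
        apply mul_le_mul_of_nonneg_left hlog1x
        nlinarith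
      have h3 : ((N:ℝ)*L - 1) * (-x - x^2/2) ≤ -L := by
        have hxN : x * (N:ℝ) = 1 := by rw [hxdef]; field_simp
        have e1 : (N:ℝ)*L*x = L := by
          have : (N:ℝ)*L*x = L * (x * N) := by ring
          rw [this, hxN, mul_one]
        have e2 : (N:ℝ)*L*x^2 = L*x := by
          have : (N:ℝ)*L*x^2 = (L*x) * (x * N) := by ring
          rw [this, hxN, mul_one]
        have e3 : (0:ℝ) ≤ (L - 2 - x) * x := mul_nonneg (by linarith) hx0.le
        nlinarith [e1, e2, e3]
      linarith
    have hq : (1 - x)^k ≤ x := by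
      have h1x : (0:ℝ) < 1 - x := by linarith
      have hee := Real.exp_nat_mul (Real.log (1-x)) k
      rw [Real.exp_log h1x] at hee
      rw [← hee]
      calc Real.exp ((k:ℝ) * Real.log (1-x)) ≤ Real.exp (-L) := Real.exp_le_exp.2 hklog
        _ = x := by rw [hL, Real.exp_neg, Real.exp_log hN0, hxdef, one_div]
    -- convert to ℕ inequality
    have hcast : ((N:ℝ) - 1) = ((N - 1 : ℕ) : ℝ) := by
      rw [Nat.cast_sub hN]; norm_num
    have hreal : (N:ℝ) * ((N-1:ℕ):ℝ)^k ≤ (N:ℝ)^k := by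
      have h1 : (1 - x) = ((N:ℝ) - 1)/N := by rw [hxdef]; field_simp
      have h2 : ((N:ℝ) - 1)^k / (N:ℝ)^k ≤ 1/N := by
        rw [← div_pow, ← h1]
        rw [hxdef] at hq; exact hq
      rw [div_le_div_iff₀ (by positivity) hN0] at h2
      rw [← hcast]
      nlinarith [pow_pos hN0 k]
    exact_mod_cast hreal

open MeasureTheory in
private lemma miss_measure (N : ℕ) (hN : 1 ≤ N)
    (μ : Measure (ℕ → Fin N))
    (hμ : ∀ (s : Finset ℕ) (f : ℕ → Fin N),
      μ {ω : ℕ → Fin N | ∀ j ∈ s, ω j = f j} = ((N : ENNReal)⁻¹) ^ s.card)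
    (p : Fin N) (r : ℕ) :
    μ {ω : ℕ → Fin N | ∀ j < r, ω j ≠ p}
      = ((N - 1 : ℕ) : ENNReal) ^ r * ((N : ENNReal)⁻¹) ^ r := by
  classical
  set F : Finset (Fin r → Fin N) := Fintype.piFinset (fun _ => Finset.univ.erase p) with hF
  set ex : (Fin r → Fin N) → (ℕ → Fin N) :=
    fun g j => if h : j < r then g ⟨j, h⟩ else ⟨0, hN⟩ with hex
  set C : (Fin r → Fin N) → Set (ℕ → Fin N) :=
    fun g => {ω | ∀ j ∈ Finset.range r, ω j = ex g j} with hC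
  have hmeasC : ∀ g, MeasurableSet (C g) := by
    intro g
    have : C g = ⋂ j ∈ Finset.range r, {ω : ℕ → Fin N | ω j = ex g j} := by
      ext ω; simp [hC]
    rw [this]
    exact Finset.measurableSet_biInter _
      (fun j _ => (measurable_pi_apply j) (measurableSet_singleton _))
  have hcover : {ω : ℕ → Fin N | ∀ j < r, ω j ≠ p} = ⋃ g ∈ F, C g := by
    ext ω
    simp only [Set.mem_setOf_eq, Set.mem_iUnion]
    constructor
    · intro h
      refine ⟨fun i => ω i, ?_, ?_⟩
      · rw [hF, Fintype.mem_piFinset]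
        intro i; exact Finset.mem_erase.2 ⟨h i i.isLt, Finset.mem_univ _⟩
      · intro j hj
        rw [Finset.mem_range] at hj
        simp [hC, hex, hj]
    · rintro ⟨g, hg, hωg⟩ j hj
      have h1 := hωg j (Finset.mem_range.2 hj)
      rw [h1]
      simp only [hex, dif_pos hj]
      rw [hF, Fintype.mem_piFinset] at hg
      exact Finset.ne_of_mem_erase (hg ⟨j, hj⟩)
  have hdisj : (↑F : Set (Fin r → Fin N)).PairwiseDisjoint C := by
    intro g _ g' _ hgg'
    refine Set.disjoint_left.2 (fun ω hω hω' => hgg' ?_)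
    funext i
    have h1 := hω i.val (Finset.mem_range.2 i.isLt)
    have h2 := hω' i.val (Finset.mem_range.2 i.isLt)
    simp only [hex, dif_pos i.isLt] at h1 h2
    rw [← Fin.eta i i.isLt]
    rw [← h1, ← h2]
  have hcard : F.card = (N - 1) ^ r := by
    rw [hF, Fintype.card_piFinset]
    simp [Finset.card_erase_of_mem]
  rw [hcover, measure_biUnion_finset hdisj (fun g _ => hmeasC g)]
  have hcval : ∀ g ∈ F, μ (C g) = ((N : ENNReal)⁻¹) ^ r := by
    intro g _
    have h := hμ (Finset.range r) (ex g)
    rw [Finset.card_range] at h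
    exact h
  rw [Finset.sum_congr rfl hcval, Finset.sum_const, hcard, nsmul_eq_mul]
  push_cast
  ring

open scoped BigOperators

private lemma split_tsum (f : ℕ → ENNReal) (k : ℕ) :
    ∑' i, f i = ∑ i ∈ Finset.range k, f i + ∑' i, f (i + k) :=
  (Summable.sum_add_tsum_nat_add' (f := f) (k := k) ENNReal.summable).symm

set_option maxHeartbeats 1000000 in
open MeasureTheory in
/-- Bound on the expected covering time (the paper's Eq. r2exp): with `μ` the infinite product
(over `ℕ`) of the uniform probability measure on `Fin N` and `T` the covering time,
`∫ T dμ ≤ N · (1 + log N)`. -/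
theorem stmt6 (N : ℕ) (hN : 1 ≤ N)
    (μ : MeasureTheory.Measure (ℕ → Fin N)) [MeasureTheory.IsProbabilityMeasure μ]
    (hμ : ∀ (s : Finset ℕ) (f : ℕ → Fin N),
      μ {ω : ℕ → Fin N | ∀ j ∈ s, ω j = f j} = ((N : ENNReal)⁻¹) ^ s.card)
    (T : (ℕ → Fin N) → ℕ)
    (hT : ∀ ω, T ω = sInf {r : ℕ | ∀ p : Fin N, ∃ j < r, ω j = p}) :
    ∫ ω, (T ω : ℝ) ∂μ ≤ (N : ℝ) * (1 + Real.log N) := by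
  classical
  have hNR : (1:ℝ) ≤ (N:ℝ) := by exact_mod_cast hN
  have hlogN : (0:ℝ) ≤ Real.log N := Real.log_nonneg hNR
  have hBnn : (0:ℝ) ≤ (N : ℝ) * (1 + Real.log N) := by nlinarith
  -- measurability of covering events
  have hmeasB : ∀ r : ℕ, MeasurableSet {ω : ℕ → Fin N | ∀ p : Fin N, ∃ j < r, ω j = p} := by
    intro r
    have h : {ω : ℕ → Fin N | ∀ p : Fin N, ∃ j < r, ω j = p}
        = ⋂ p : Fin N, ⋃ j ∈ Finset.range r, {ω : ℕ → Fin N | ω j = p} := by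
      ext ω; simp
    rw [h]
    exact MeasurableSet.iInter fun p =>
      Finset.measurableSet_biUnion _
        (fun j _ => (measurable_pi_apply j) (measurableSet_singleton _))
  -- description of the level sets of T
  have hgt : ∀ r : ℕ, {ω | r < T ω} =
      (⋃ r', {ω : ℕ → Fin N | ∀ p : Fin N, ∃ j < r', ω j = p})
        ∩ {ω : ℕ → Fin N | ∀ p : Fin N, ∃ j < r, ω j = p}ᶜ := by
    intro r
    ext ω
    simp only [Set.mem_setOf_eq, Set.mem_inter_iff, Set.mem_iUnion, Set.mem_compl_iff]
    rw [hT ω]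
    constructor
    · intro h
      have hne : {r' : ℕ | ∀ p : Fin N, ∃ j < r', ω j = p}.Nonempty := by
        by_contra hemp
        rw [Set.not_nonempty_iff_eq_empty] at hemp
        rw [hemp, Nat.sInf_empty] at h; omega
      obtain ⟨r', hr'⟩ := hne
      refine ⟨⟨r', hr'⟩, fun hB => ?_⟩
      have hle := Nat.sInf_le (show r ∈ {r' : ℕ | ∀ p : Fin N, ∃ j < r', ω j = p} from hB)
      omega
    · rintro ⟨⟨r', hr'⟩, hnB⟩
      by_contra hle
      push_neg at hle
      have hmem := Nat.sInf_mem (⟨r', hr'⟩ :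
        {r' : ℕ | ∀ p : Fin N, ∃ j < r', ω j = p}.Nonempty)
      refine hnB (fun p => ?_)
      obtain ⟨j, hj1, hj2⟩ := hmem p
      exact ⟨j, lt_of_lt_of_le hj1 hle, hj2⟩
  have hmeasgt : ∀ r, MeasurableSet {ω | r < T ω} := fun r => by
    rw [hgt r]
    exact (MeasurableSet.iUnion fun r' => hmeasB r').inter (hmeasB r).compl
  have hmeasT : Measurable T := by
    apply measurable_to_countable'
    intro n
    cases n with
    | zero =>
      have h : T ⁻¹' {0} = {ω | 0 < T ω}ᶜ := by
        ext ω
        simp only [Set.mem_preimage, Set.mem_singleton_iff, Set.mem_compl_iff,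
          Set.mem_setOf_eq]
        omega
      rw [h]; exact (hmeasgt 0).compl
    | succ n =>
      have h : T ⁻¹' {n+1} = {ω | n < T ω} ∩ {ω | n+1 < T ω}ᶜ := by
        ext ω
        simp only [Set.mem_preimage, Set.mem_singleton_iff, Set.mem_compl_iff,
          Set.mem_setOf_eq, Set.mem_inter_iff]
        omega
      rw [h]; exact (hmeasgt n).inter (hmeasgt (n+1)).compl
  -- layer cake for ℕ-valued T
  have hTsum : ∀ ω, (T ω : ENNReal)
      = ∑' r : ℕ, Set.indicator {ω' | r < T ω'} (fun _ => (1:ENNReal)) ω := by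
    intro ω
    rw [tsum_eq_sum (s := Finset.range (T ω)) (fun r hr => by
      rw [Finset.mem_range, not_lt] at hr
      exact Set.indicator_of_notMem (by simpa using not_lt.2 hr) _)]
    rw [Finset.sum_congr rfl (fun r hr => Set.indicator_of_mem
      (by simpa using Finset.mem_range.1 hr) (fun _ => (1:ENNReal)))]
    simp
  have hlin : ∫⁻ ω, (T ω : ENNReal) ∂μ = ∑' r : ℕ, μ {ω | r < T ω} := by
    calc ∫⁻ ω, (T ω : ENNReal) ∂μ
        = ∫⁻ ω, ∑' r : ℕ, Set.indicator {ω' | r < T ω'} (fun _ => (1:ENNReal)) ω ∂μ :=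
          lintegral_congr fun ω => hTsum ω
      _ = ∑' r : ℕ, ∫⁻ ω, Set.indicator {ω' | r < T ω'} (fun _ => (1:ENNReal)) ω ∂μ :=
          lintegral_tsum fun r => (measurable_const.indicator (hmeasgt r)).aemeasurable
      _ = ∑' r : ℕ, μ {ω | r < T ω} :=
          tsum_congr fun r => lintegral_indicator_one (hmeasgt r)
  -- union bound
  set q : ENNReal := ((N - 1 : ℕ) : ENNReal) * ((N : ENNReal))⁻¹ with hqdef
  have hbound : ∀ r : ℕ, μ {ω | r < T ω} ≤ (N : ENNReal) * q ^ r := by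
    intro r
    have hsub : {ω | r < T ω} ⊆ ⋃ p : Fin N, {ω : ℕ → Fin N | ∀ j < r, ω j ≠ p} := by
      intro ω hω
      rw [Set.mem_setOf_eq, hT ω] at hω
      have h : ¬ (∀ p : Fin N, ∃ j < r, ω j = p) := by
        intro hB
        have hle := Nat.sInf_le (show r ∈ {r' : ℕ | ∀ p : Fin N, ∃ j < r', ω j = p} from hB)
        omega
      push_neg at h
      obtain ⟨p, hp⟩ := h
      exact Set.mem_iUnion.2 ⟨p, hp⟩
    calc μ {ω | r < T ω} ≤ μ (⋃ p : Fin N, {ω : ℕ → Fin N | ∀ j < r, ω j ≠ p}) :=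
          measure_mono hsub
      _ ≤ ∑' p : Fin N, μ {ω : ℕ → Fin N | ∀ j < r, ω j ≠ p} := measure_iUnion_le _
      _ = ∑' _p : Fin N, ((N - 1 : ℕ) : ENNReal) ^ r * ((N : ENNReal)⁻¹) ^ r :=
          tsum_congr fun p => miss_measure N hN μ hμ p r
      _ = (N : ENNReal) * q ^ r := by
          rw [tsum_fintype]
          simp only [Finset.sum_const, Finset.card_univ, Fintype.card_fin, nsmul_eq_mul,
            hqdef, mul_pow]
  obtain ⟨k, hk1, hk2⟩ := keyk N hN
  have hNne : (N : ENNReal) ≠ 0 := by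
    simp only [ne_eq, Nat.cast_eq_zero]; omega
  have hNtop : (N : ENNReal) ≠ ⊤ := ENNReal.natCast_ne_top N
  have hq1 : (N : ENNReal) * q ^ k ≤ 1 := by
    have hrw : (N : ENNReal) * q ^ k
        = ((N * (N-1)^k : ℕ) : ENNReal) * (((N^k : ℕ) : ENNReal))⁻¹ := by
      rw [hqdef, mul_pow, ← ENNReal.inv_pow]
      push_cast
      ring
    rw [hrw]
    have hle : ((N * (N-1)^k : ℕ) : ENNReal) ≤ ((N^k : ℕ) : ENNReal) := by
      exact_mod_cast hk1
    have hne : ((N^k : ℕ) : ENNReal) ≠ 0 := by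
      simp only [ne_eq, Nat.cast_eq_zero]
      positivity
    calc ((N * (N-1)^k : ℕ) : ENNReal) * (((N^k : ℕ) : ENNReal))⁻¹
        ≤ ((N^k : ℕ) : ENNReal) * (((N^k : ℕ) : ENNReal))⁻¹ := by gcongr
      _ = 1 := ENNReal.mul_inv_cancel hne (ENNReal.natCast_ne_top _)
  have hsubq : (1 : ENNReal) - q = (N : ENNReal)⁻¹ := by
    have hq_add : (N : ENNReal)⁻¹ + q = 1 := by
      rw [hqdef]
      have : (N : ENNReal)⁻¹ + ((N - 1 : ℕ) : ENNReal) * ((N : ENNReal))⁻¹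
          = (1 + ((N - 1 : ℕ) : ENNReal)) * ((N : ENNReal))⁻¹ := by ring
      rw [this]
      have h1 : (1 + ((N - 1 : ℕ) : ENNReal)) = (N : ENNReal) := by
        rw [← Nat.cast_one, ← Nat.cast_add]
        congr 1
        omega
      rw [h1]
      exact ENNReal.mul_inv_cancel hNne hNtop
    have hqtop : q ≠ ⊤ := by
      rw [hqdef]
      exact ENNReal.mul_ne_top (ENNReal.natCast_ne_top _) (ENNReal.inv_ne_top.2 hNne)
    rw [← hq_add, ENNReal.add_sub_cancel_right hqtop]
  have hgeo : ∑' i : ℕ, μ {ω | (i + k) < T ω} ≤ (N : ENNReal) := by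
    calc ∑' i : ℕ, μ {ω | (i + k) < T ω}
        ≤ ∑' i : ℕ, (N : ENNReal) * q ^ (i + k) :=
          ENNReal.tsum_le_tsum fun i => hbound (i + k)
      _ = (N : ENNReal) * q ^ k * ∑' i : ℕ, q ^ i := by
          rw [← ENNReal.tsum_mul_left]
          congr 1
          funext i
          rw [pow_add]
          ring
      _ = (N : ENNReal) * q ^ k * ((N : ENNReal)⁻¹)⁻¹ := by
          rw [ENNReal.tsum_geometric, hsubq]
      _ = (N : ENNReal) * q ^ k * (N : ENNReal) := by rw [inv_inv]
      _ ≤ 1 * (N : ENNReal) := mul_le_mul_left hq1 _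
      _ = (N : ENNReal) := one_mul _
  have hsplit : ∑' r : ℕ, μ {ω | r < T ω} ≤ (k : ENNReal) + (N : ENNReal) := by
    rw [split_tsum (fun r => μ {ω | r < T ω}) k]
    refine add_le_add ?_ hgeo
    calc ∑ r ∈ Finset.range k, μ {ω | r < T ω}
        ≤ ∑ _r ∈ Finset.range k, (1:ENNReal) :=
          Finset.sum_le_sum fun r _ => prob_le_one
      _ = (k : ENNReal) := by simp
  have hfinal : ∫⁻ ω, (T ω : ENNReal) ∂μ ≤ ENNReal.ofReal ((N:ℝ) * (1 + Real.log N)) := by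
    rw [hlin]
    refine le_trans hsplit ?_
    rw [← ENNReal.ofReal_natCast k, ← ENNReal.ofReal_natCast N,
      ← ENNReal.ofReal_add (by positivity) (by positivity)]
    apply ENNReal.ofReal_le_ofReal
    have hexp : (N:ℝ) * (1 + Real.log N) = (N:ℝ) + (N:ℝ) * Real.log N := by ring
    rw [hexp]
    linarith
  have hInt : Integrable (fun ω => (T ω : ℝ)) μ := by
    constructor
    · exact (measurable_from_top.comp hmeasT).aestronglyMeasurable
    · show ∫⁻ ω, (‖(T ω : ℝ)‖₊ : ENNReal) ∂μ < ⊤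
      have h : ∀ ω, (‖(T ω : ℝ)‖₊ : ENNReal) = (T ω : ENNReal) := by
        intro ω
        simp [Real.nnnorm_natCast]
      calc ∫⁻ ω, (‖(T ω : ℝ)‖₊ : ENNReal) ∂μ = ∫⁻ ω, (T ω : ENNReal) ∂μ :=
            lintegral_congr h
        _ < ⊤ := lt_of_le_of_lt hfinal ENNReal.ofReal_lt_top
  rw [integral_eq_lintegral_of_nonneg_ae
    (Filter.Eventually.of_forall fun ω => by positivity) hInt.aestronglyMeasurable]
  apply ENNReal.toReal_le_of_le_ofReal hBnn
  calc ∫⁻ ω, ENNReal.ofReal ((T ω : ℝ)) ∂μ = ∫⁻ ω, (T ω : ENNReal) ∂μ :=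
        lintegral_congr fun ω => ENNReal.ofReal_natCast _
    _ ≤ ENNReal.ofReal ((N:ℝ) * (1 + Real.log N)) := hfinal
end

section
/- Let n ≥ 1 and let P : Matrix (Fin n) (Fin n) ℝ be row-stochastic (all entries nonnegative, every row sums to 1) and primitive, i.e., there exists k ≥ 1 such that every entry of P^k is strictly positive. Then every complex eigenvalue μ of the complex matrix P.map Complex.ofReal with μ ≠ 1 satisfies ‖μ‖ < 1. -/
open scoped BigOperators

/-- Powers (with positive exponent) of a nonnegative matrix have nonnegative entries. -/
lemma aux_pow_nonneg (n : ℕ) (P : Matrix (Fin n) (Fin n) ℝ)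
    (hnonneg : ∀ i j, 0 ≤ P i j) (m : ℕ) (hm : 1 ≤ m) :
    ∀ i j, 0 ≤ (P ^ m) i j := by
  induction m with
  | zero => omega
  | succ m ih =>
    rcases Nat.lt_or_ge m 1 with h | h
    · have : m = 0 := by omega
      subst this
      intro i j
      simpa using hnonneg i j
    · intro i j
      rw [pow_succ, Matrix.mul_apply]
      exact Finset.sum_nonneg fun l _ => mul_nonneg (ih h i l) (hnonneg l j)

/-- Powers of a row-stochastic matrix are row-stochastic. -/
lemma aux_pow_row (n : ℕ) (P : Matrix (Fin n) (Fin n) ℝ)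
    (hrow : ∀ i, ∑ j, P i j = 1) (m : ℕ) :
    ∀ i, ∑ j, (P ^ m) i j = 1 := by
  induction m with
  | zero => intro i; simp [Matrix.one_apply, Finset.sum_ite_eq' Finset.univ i]
  | succ m ih =>
    intro i
    simp only [pow_succ, Matrix.mul_apply]
    rw [Finset.sum_comm]
    calc ∑ l, ∑ j, (P ^ m) i l * P l j
        = ∑ l, (P ^ m) i l * ∑ j, P l j := by simp [Finset.mul_sum]
      _ = 1 := by simp [hrow, ih]

/-- Key lemma: for a strictly positive row-stochastic matrix, any complex eigenvalue has
modulus at most 1, and if the modulus is exactly 1 the eigenvalue is 1. -/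
lemma aux_key (n : ℕ) (B : Matrix (Fin n) (Fin n) ℝ)
    (hpos : ∀ i j, 0 < B i j) (hrow : ∀ i, ∑ j, B i j = 1)
    (lam : ℂ) (v : Fin n → ℂ) (hv : v ≠ 0)
    (heig : ∀ i, ∑ j, (B i j : ℂ) * v j = lam * v i) :
    ‖lam‖ ≤ 1 ∧ (‖lam‖ = 1 → lam = 1) := by
  have hn0 : 0 < n := by
    by_contra h
    exact hv (funext fun i => absurd i.2 (by omega))
  haveI : NeZero n := ⟨by omega⟩
  obtain ⟨i₀, -, hmax⟩ := Finset.exists_max_image Finset.univ (fun j => ‖v j‖)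
    Finset.univ_nonempty
  set M := ‖v i₀‖ with hM
  have hmax' : ∀ j, ‖v j‖ ≤ M := fun j => hmax j (Finset.mem_univ j)
  have hMpos : 0 < M := by
    rcases Function.ne_iff.mp hv with ⟨j, hj⟩
    have : 0 < ‖v j‖ := by simpa [norm_pos_iff] using hj
    exact lt_of_lt_of_le this (hmax' j)
  have hbound : ‖lam‖ * M ≤ M := by
    calc ‖lam‖ * M = ‖lam * v i₀‖ := by rw [norm_mul]
      _ = ‖∑ j, (B i₀ j : ℂ) * v j‖ := by rw [heig i₀]
      _ ≤ ∑ j, ‖(B i₀ j : ℂ) * v j‖ := norm_sum_le _ _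
      _ = ∑ j, B i₀ j * ‖v j‖ := by
          refine Finset.sum_congr rfl fun j _ => ?_
          rw [norm_mul, Complex.norm_real, Real.norm_of_nonneg (hpos i₀ j).le]
      _ ≤ ∑ j, B i₀ j * M :=
          Finset.sum_le_sum fun j _ =>
            mul_le_mul_of_nonneg_left (hmax' j) (hpos i₀ j).le
      _ = M := by rw [← Finset.sum_mul, hrow, one_mul]
  have hle : ‖lam‖ ≤ 1 := (mul_le_iff_le_one_left hMpos).mp hbound
  refine ⟨hle, fun hone => ?_⟩
  set c : ℂ := lam * v i₀ with hc
  have hcnorm : ‖c‖ = M := by rw [hc, norm_mul, hone, one_mul]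
  have hcne : c ≠ 0 := by
    intro h
    rw [h, norm_zero] at hcnorm
    exact absurd hcnorm.symm (ne_of_gt hMpos)
  -- sum of weighted real parts equals M^2
  have hsum : ∑ j, B i₀ j * (v j * (starRingEnd ℂ) c).re = M ^ 2 := by
    have h1 : (∑ j, (B i₀ j : ℂ) * v j) * (starRingEnd ℂ) c = c * (starRingEnd ℂ) c := by
      rw [heig i₀]
    have hre : ((∑ j, (B i₀ j : ℂ) * v j) * (starRingEnd ℂ) c).re
        = (c * (starRingEnd ℂ) c).re := by rw [h1]
    rw [Finset.sum_mul] at hre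
    have hlhs : (∑ j, (B i₀ j : ℂ) * v j * (starRingEnd ℂ) c).re
        = ∑ j, B i₀ j * (v j * (starRingEnd ℂ) c).re := by
      rw [Complex.re_sum]
      refine Finset.sum_congr rfl fun j _ => ?_
      rw [mul_assoc, Complex.re_ofReal_mul]
    rw [hlhs] at hre
    rw [hre, Complex.mul_conj]
    have : Complex.normSq c = M ^ 2 := by
      rw [Complex.normSq_eq_norm_sq, hcnorm]
    rw [this]
    exact Complex.ofReal_re _
  -- each term of the inequality is tight
  have hterm_le : ∀ j ∈ Finset.univ, B i₀ j * (v j * (starRingEnd ℂ) c).re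
      ≤ B i₀ j * M ^ 2 := by
    intro j _
    refine mul_le_mul_of_nonneg_left ?_ (hpos i₀ j).le
    calc (v j * (starRingEnd ℂ) c).re ≤ ‖v j * (starRingEnd ℂ) c‖ :=
          Complex.re_le_norm _
      _ = ‖v j‖ * ‖c‖ := by
          rw [norm_mul, Complex.norm_conj]
      _ ≤ M * M := mul_le_mul (hmax' j) (le_of_eq hcnorm) (norm_nonneg _) hMpos.le
      _ = M ^ 2 := (sq M).symm
  have hsum2 : ∑ j, B i₀ j * (v j * (starRingEnd ℂ) c).re = ∑ j, B i₀ j * M ^ 2 := by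
    rw [hsum, ← Finset.sum_mul, hrow, one_mul]
  have heq : ∀ j, (v j * (starRingEnd ℂ) c).re = M ^ 2 := by
    intro j
    have := (Finset.sum_eq_sum_iff_of_le hterm_le).mp hsum2 j (Finset.mem_univ j)
    exact mul_left_cancel₀ (ne_of_gt (hpos i₀ j)) this
  -- hence v j = c for all j
  have hvc : ∀ j, v j = c := by
    intro j
    have h0 : Complex.normSq (v j - c) ≤ 0 := by
      rw [Complex.normSq_sub, heq j]
      have h1 : Complex.normSq (v j) ≤ M ^ 2 := by
        rw [Complex.normSq_eq_norm_sq]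
        exact pow_le_pow_left₀ (norm_nonneg _) (hmax' j) 2
      have h2 : Complex.normSq c = M ^ 2 := by
        rw [Complex.normSq_eq_norm_sq, hcnorm]
      nlinarith
    have := le_antisymm h0 (Complex.normSq_nonneg _)
    exact sub_eq_zero.mp (Complex.normSq_eq_zero.mp this)
  -- conclude lam = 1
  have hvi0 : v i₀ ≠ 0 := by
    intro h
    rw [hM, h, norm_zero] at hMpos
    exact lt_irrefl 0 hMpos
  have hvi : (1 : ℂ) * v i₀ = lam * v i₀ := by
    rw [one_mul]; exact hvc i₀
  exact (mul_right_cancel₀ hvi0 hvi).symm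

/-- Strict spectral gap for a primitive row-stochastic matrix `P` (nonnegative entries, rows
summing to 1, and some power `P^k`, `k ≥ 1`, entrywise strictly positive): every complex
eigenvalue `μ ≠ 1` of the complexified matrix satisfies `‖μ‖ < 1`. -/
theorem stmt9 (n : ℕ) (hn : 1 ≤ n) (P : Matrix (Fin n) (Fin n) ℝ)
    (hnonneg : ∀ i j, 0 ≤ P i j) (hrow : ∀ i, ∑ j, P i j = 1)
    (hprim : ∃ k : ℕ, 1 ≤ k ∧ ∀ i j, 0 < (P ^ k) i j) :
    ∀ μ : ℂ, μ ∈ spectrum ℂ (P.map Complex.ofReal) → μ ≠ 1 → ‖μ‖ < 1 := by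
  obtain ⟨k, hk, hkpos⟩ := hprim
  intro μ hμ hμ1
  set A : Matrix (Fin n) (Fin n) ℂ := P.map Complex.ofReal with hA
  -- get eigenvector
  have hnotunit : ¬IsUnit ((algebraMap ℂ (Matrix (Fin n) (Fin n) ℂ)) μ - A) :=
    spectrum.mem_iff.mp hμ
  have hdet : ((algebraMap ℂ (Matrix (Fin n) (Fin n) ℂ)) μ - A).det = 0 := by
    by_contra h
    exact hnotunit ((Matrix.isUnit_iff_isUnit_det _).mpr (isUnit_iff_ne_zero.mpr h))
  obtain ⟨v, hv, hveq⟩ := Matrix.exists_mulVec_eq_zero_iff.mpr hdet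
  have heig : A.mulVec v = μ • v := by
    have h1 : (algebraMap ℂ (Matrix (Fin n) (Fin n) ℂ)) μ = μ • 1 :=
      Algebra.algebraMap_eq_smul_one μ
    rw [h1, Matrix.sub_mulVec, Matrix.smul_mulVec, Matrix.one_mulVec,
      sub_eq_zero] at hveq
    exact hveq.symm
  -- powers
  have hpow : ∀ m, (A ^ m).mulVec v = μ ^ m • v := by
    intro m
    induction m with
    | zero => simp [Matrix.one_mulVec]
    | succ m ih =>
      rw [pow_succ, ← Matrix.mulVec_mulVec, heig, Matrix.mulVec_smul, ih,
        pow_succ, smul_smul, mul_comm]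
  have hmap : ∀ m, (P ^ m).map Complex.ofReal = A ^ m := by
    intro m
    have := map_pow (Complex.ofRealHom.mapMatrix) P m
    simp only [RingHom.mapMatrix_apply] at this
    exact this
  have heigpt : ∀ m, ∀ i, ∑ j, ((P ^ m) i j : ℂ) * v j = μ ^ m * v i := by
    intro m i
    have h1 := congrFun (hpow m) i
    rw [← hmap m] at h1
    simpa [Matrix.mulVec, dotProduct, Matrix.map_apply] using h1
  -- apply the key lemma to P ^ k
  have hkey := aux_key n (P ^ k) hkpos (aux_pow_row n P hrow k) (μ ^ k) v hv (heigpt k)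
  have hle : ‖μ‖ ≤ 1 := by
    by_contra h
    push_neg at h
    have : 1 < ‖μ‖ ^ k := one_lt_pow₀ h (by omega)
    rw [← norm_pow] at this
    linarith [hkey.1]
  refine lt_of_le_of_ne hle fun hone => ?_
  -- ‖μ‖ = 1: derive μ = 1, contradiction
  have hnk : ‖μ ^ k‖ = 1 := by rw [norm_pow, hone, one_pow]
  have hk1 : μ ^ k = 1 := hkey.2 hnk
  -- P ^ (k+1) is also strictly positive
  have hk1pos : ∀ i j, 0 < (P ^ (k + 1)) i j := by
    intro i j
    rw [pow_succ', Matrix.mul_apply]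
    refine Finset.sum_pos' (fun l _ => mul_nonneg (hnonneg i l) (hkpos l j).le) ?_
    have hex : ∃ l, 0 < P i l := by
      by_contra h
      push_neg at h
      have : ∑ l, P i l ≤ 0 := Finset.sum_nonpos fun l _ => h l
      rw [hrow i] at this
      linarith
    obtain ⟨l, hl⟩ := hex
    exact ⟨l, Finset.mem_univ l, mul_pos hl (hkpos l j)⟩
  have hkey2 := aux_key n (P ^ (k + 1)) hk1pos (aux_pow_row n P hrow (k + 1))
    (μ ^ (k + 1)) v hv (heigpt (k + 1))
  have hnk1 : ‖μ ^ (k + 1)‖ = 1 := by rw [norm_pow, hone, one_pow]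
  have hk2 : μ ^ (k + 1) = 1 := hkey2.2 hnk1
  rw [pow_succ, hk1, one_mul] at hk2
  exact hμ1 hk2
end

section
/- Fix a natural number N ≥ 1, a real constant K ≥ 0, and a real number S with 0 ≤ S < 1. Define p(N,r) = ∑_{i=1}^{N} (−1)^{i+1} · (N choose i) · ((N−i)/N)^r. Then the sequence r ↦ (1 − p(N,r)) · K · S^r + p(N,r) tends to 0 as r → ∞. -/
open scoped BigOperators

/-- `p(N,r)` as in the paper's Lemma. -/
noncomputable def pNr (N r : ℕ) : ℝ :=
  ∑ i ∈ Finset.Icc 1 N,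
    (-1 : ℝ) ^ (i + 1) * (N.choose i : ℝ) * (((N - i : ℕ) : ℝ) / (N : ℝ)) ^ r

/-- The paper's privacy bound (Eq. adv): for `N ≥ 1`, `K ≥ 0` and `0 ≤ S < 1`, the adversary's
advantage bound `(1 − p(N,r)) · K · S^r + p(N,r)` tends to `0` as `r → ∞`. -/
theorem stmt12 (N : ℕ) (hN : 1 ≤ N) (K S : ℝ) (hK : 0 ≤ K) (hS0 : 0 ≤ S) (hS1 : S < 1) :
    Filter.Tendsto (fun r : ℕ => (1 - pNr N r) * K * S ^ r + pNr N r)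
      Filter.atTop (nhds 0) := by
  have hp : Filter.Tendsto (fun r : ℕ => pNr N r) Filter.atTop (nhds 0) := by
    have h0 : (0 : ℝ) = ∑ i ∈ Finset.Icc 1 N, (0 : ℝ) := by simp
    rw [show nhds (0 : ℝ) = nhds (∑ i ∈ Finset.Icc 1 N, (0 : ℝ)) by rw [← h0]]
    apply tendsto_finset_sum
    intro i hi
    simp only [Finset.mem_Icc] at hi
    have hratio : |(((N - i : ℕ) : ℝ) / (N : ℝ))| < 1 := by
      rw [abs_div, abs_of_nonneg (by positivity), abs_of_nonneg (by positivity)]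
      rw [div_lt_one (by exact_mod_cast hN)]
      exact_mod_cast Nat.sub_lt (by omega) (by omega)
    have := tendsto_pow_atTop_nhds_zero_of_abs_lt_one hratio
    have := this.const_mul ((-1 : ℝ) ^ (i + 1) * (N.choose i : ℝ))
    simpa [mul_assoc] using this
  have hSr : Filter.Tendsto (fun r : ℕ => S ^ r) Filter.atTop (nhds 0) :=
    tendsto_pow_atTop_nhds_zero_of_abs_lt_one (by rw [abs_of_nonneg hS0]; exact hS1)
  have h1 : Filter.Tendsto (fun r : ℕ => (1 - pNr N r) * K * S ^ r) Filter.atTop (nhds 0) := by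
    have := (((tendsto_const_nhds (x := (1:ℝ))).sub hp).mul_const K).mul hSr
    simpa using this
  simpa using h1.add hp
end

section
/- For every natural number N ≥ 1, the series ∑_{r=0}^{∞} p(N,r) converges and its sum equals N · ∑_{k=1}^{N} 1/k, where p(N,r) = ∑_{i=1}^{N} (−1)^{i+1} · (N choose i) · ((N−i)/N)^r. -/
open scoped BigOperators

open Finset

private lemma alt_sum (n : ℕ) :
    ∑ i ∈ Finset.range (n + 1), (-1 : ℝ) ^ i * ((n + 1).choose (i + 1) : ℝ) = 1 := by
  have h := Int.alternating_sum_range_choose (n := n + 1)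
  simp only [Nat.succ_ne_zero, if_false] at h
  have h' : ∑ j ∈ Finset.range (n + 2), (-1 : ℝ) ^ j * ((n + 1).choose j : ℝ) = 0 := by
    exact_mod_cast congrArg (Int.cast : ℤ → ℝ) h
  rw [Finset.sum_range_succ'] at h'
  simp only [pow_succ, pow_zero, one_mul, Nat.choose_zero_right, Nat.cast_one, mul_one] at h'
  have : -∑ i ∈ Finset.range (n + 1), (-1 : ℝ) ^ i * ((n + 1).choose (i + 1) : ℝ) + 1 = 0 := by
    rw [← h', ← Finset.sum_neg_distrib]
    congr 1
    refine Finset.sum_congr rfl fun i _ => by ring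
  linarith

private lemma harm (N : ℕ) :
    ∑ i ∈ Finset.range N, (-1 : ℝ) ^ i * (N.choose (i + 1) : ℝ) / (i + 1)
      = ∑ k ∈ Finset.range N, (1 : ℝ) / (k + 1) := by
  induction N with
  | zero => simp
  | succ N ih =>
    have hsplit : ∀ i ∈ Finset.range (N + 1),
        (-1 : ℝ) ^ i * ((N + 1).choose (i + 1) : ℝ) / (i + 1)
          = (-1 : ℝ) ^ i * (N.choose (i + 1) : ℝ) / (i + 1)
            + (-1 : ℝ) ^ i * (N.choose i : ℝ) / (i + 1) := by
      intro i _
      rw [Nat.choose_succ_succ, Nat.cast_add]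
      ring
    rw [Finset.sum_congr rfl hsplit, Finset.sum_add_distrib]
    have h1 : ∑ i ∈ Finset.range (N + 1), (-1 : ℝ) ^ i * (N.choose (i + 1) : ℝ) / (i + 1)
        = ∑ i ∈ Finset.range N, (-1 : ℝ) ^ i * (N.choose (i + 1) : ℝ) / (i + 1) := by
      rw [Finset.sum_range_succ, Nat.choose_succ_self]
      simp
    have key : ∀ i : ℕ, (N.choose i : ℝ) / (i + 1)
        = ((N + 1).choose (i + 1) : ℝ) / (N + 1) := by
      intro i
      have h := Nat.add_one_mul_choose_eq N i
      have h' : ((N + 1 : ℕ) : ℝ) * (N.choose i : ℝ) = ((N + 1).choose (i + 1) : ℝ) * (i + 1) := by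
        exact_mod_cast congrArg (Nat.cast : ℕ → ℝ) h
      have hi : ((i : ℝ) + 1) ≠ 0 := by positivity
      have hn : ((N : ℝ) + 1) ≠ 0 := by positivity
      field_simp
      push_cast at h' ⊢
      linarith [h']
    have h2 : ∑ i ∈ Finset.range (N + 1), (-1 : ℝ) ^ i * (N.choose i : ℝ) / (i + 1)
        = 1 / (N + 1) := by
      have : ∀ i ∈ Finset.range (N + 1),
          (-1 : ℝ) ^ i * (N.choose i : ℝ) / (i + 1)
            = ((-1 : ℝ) ^ i * ((N + 1).choose (i + 1) : ℝ)) * (1 / (N + 1)) := by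
        intro i _
        rw [mul_div_assoc, key i]
        ring
      rw [Finset.sum_congr rfl this, ← Finset.sum_mul, alt_sum, one_mul]
    rw [h1, ih, h2, Finset.sum_range_succ]

/-- Summing the covering-time tail probabilities
`p(N,r) = ∑_{i=1}^{N} (−1)^{i+1} (N choose i) ((N−i)/N)^r` over all `r` gives the expected
covering time: `∑_{r=0}^{∞} p(N,r) = N · ∑_{k=1}^{N} 1/k` (in particular the series converges). -/
theorem stmt13 (N : ℕ) (hN : 1 ≤ N) :
    HasSum
      (fun r : ℕ => ∑ i ∈ Finset.Icc 1 N,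
        (-1 : ℝ) ^ (i + 1) * (N.choose i : ℝ) * (((N - i : ℕ) : ℝ) / (N : ℝ)) ^ r)
      ((N : ℝ) * ∑ k ∈ Finset.Icc 1 N, (1 : ℝ) / (k : ℝ)) := by
  have hN0 : (0 : ℝ) < (N : ℝ) := by exact_mod_cast hN
  -- each i gives a geometric series summing to c i * (N / i)
  have hgeo : ∀ i ∈ Finset.Icc 1 N,
      HasSum (fun r : ℕ => (-1 : ℝ) ^ (i + 1) * (N.choose i : ℝ) * (((N - i : ℕ) : ℝ) / (N : ℝ)) ^ r)
        ((-1 : ℝ) ^ (i + 1) * (N.choose i : ℝ) * ((N : ℝ) / (i : ℝ))) := by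
    intro i hi
    rw [Finset.mem_Icc] at hi
    have hi1 : 1 ≤ i := hi.1
    have hiN : i ≤ N := hi.2
    have hq0 : (0 : ℝ) ≤ ((N - i : ℕ) : ℝ) / (N : ℝ) := by positivity
    have hsub : ((N - i : ℕ) : ℝ) = (N : ℝ) - (i : ℝ) := Nat.cast_sub hiN
    have hq1 : ((N - i : ℕ) : ℝ) / (N : ℝ) < 1 := by
      rw [div_lt_one hN0, hsub]
      have : (0 : ℝ) < (i : ℝ) := by exact_mod_cast hi1
      linarith
    have h := hasSum_geometric_of_lt_one hq0 hq1
    have hval : (1 - ((N - i : ℕ) : ℝ) / (N : ℝ))⁻¹ = (N : ℝ) / (i : ℝ) := by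
      rw [hsub]
      have hipos : (0 : ℝ) < (i : ℝ) := by exact_mod_cast hi1
      rw [show (1 : ℝ) - ((N : ℝ) - (i : ℝ)) / (N : ℝ) = (i : ℝ) / (N : ℝ) by
        field_simp; ring]
      rw [inv_div]
    rw [hval] at h
    exact h.mul_left _
  have hsum := hasSum_sum hgeo
  convert hsum using 1
  -- show N * ∑ 1/k = ∑ (-1)^(i+1) C(N,i) * (N/i)
  rw [show Finset.Icc 1 N = Finset.Ico 1 (N + 1) by rw [Finset.Ico_add_one_right_eq_Icc]] at *
  rw [Finset.sum_Ico_eq_sum_range, Finset.sum_Ico_eq_sum_range]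
  simp only [Nat.add_sub_cancel]
  have goal : ∑ i ∈ Finset.range N,
      (-1 : ℝ) ^ (1 + i + 1) * (N.choose (1 + i) : ℝ) * ((N : ℝ) / ((1 + i : ℕ) : ℝ))
      = (N : ℝ) * ∑ i ∈ Finset.range N, (-1 : ℝ) ^ i * (N.choose (i + 1) : ℝ) / (i + 1) := by
    rw [Finset.mul_sum]
    refine Finset.sum_congr rfl fun i _ => ?_
    have : (1 + i + 1) = i + 2 := by ring
    rw [this, pow_add, show (1 + i) = i + 1 by ring]
    push_cast
    ring
  rw [goal, harm N]
  congr 1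
  refine Finset.sum_congr rfl fun k _ => ?_
  push_cast
  ring
end
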